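/- arXiv:1809.07478 — 4 statements merged into one kernel-verified Lean document; each statement's English description precedes it below -/
import Mathlib

section
/- Let q, k, r be distinct primes with q ≡ 3 (mod 4) and k ≡ r ≡ 1 (mod 4). Then the extension Q(√q, √k, √r) / Q(√q, √(kr)) is unramified at every finite prime; in particular, every prime ideal of the ring of integers of Q(√q, √(kr)) is unramified in Q(√q, √k, √r). -/
open IntermediateField NumberField Polynomial

theorem unram_general {K L : Type*} [Field K] [Field L] [NumberField K] [NumberField L]
    [Algebra K L] (x₁ x₂ : 𝓞 L)
    (h₁ : Algebra.adjoin K {(algebraMap (𝓞 L) L x₁)} = ⊤)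
    (h₂ : Algebra.adjoin K {(algebraMap (𝓞 L) L x₂)} = ⊤)
    (hco : ∀ P : Ideal (𝓞 L), P.IsMaximal →
      aeval x₁ (derivative (minpoly (𝓞 K) x₁)) ∈ P →
      aeval x₂ (derivative (minpoly (𝓞 K) x₂)) ∈ P → False) :
    ∀ p : Ideal (𝓞 K), p.IsMaximal → ∀ P : Ideal (𝓞 L), P.IsMaximal →
      Ideal.comap (algebraMap (𝓞 K) (𝓞 L)) P = p →
      Ideal.ramificationIdx' p P = 1 := by
  intro p hp P hP hcom
  have d₁ := aeval_derivative_mem_differentIdeal (𝓞 K) K L x₁ h₁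
  have d₂ := aeval_derivative_mem_differentIdeal (𝓞 K) K L x₂ h₂
  have hpbot : p ≠ ⊥ :=
    Ring.ne_bot_of_isMaximal_of_not_isField hp (NumberField.RingOfIntegers.not_isField K)
  have hle : Ideal.map (algebraMap (𝓞 K) (𝓞 L)) p ≤ P :=
    Ideal.map_le_iff_le_comap.mpr hcom.ge
  have hmapbot : Ideal.map (algebraMap (𝓞 K) (𝓞 L)) p ≠ ⊥ :=
    (Ideal.map_eq_bot_iff_of_injective (NumberField.RingOfIntegers.algebraMap.injective K L)).not.mpr hpbot
  have hne : Ideal.ramificationIdx' p P ≠ 0 :=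
    Ideal.IsDedekindDomain.ramificationIdx'_ne_zero hmapbot hP.isPrime hle
  set e := Ideal.ramificationIdx' p P with he
  by_contra hne1
  have h2 : 2 ≤ e := by omega
  have hdvd : P ^ e ∣ Ideal.map (algebraMap (𝓞 K) (𝓞 L)) p :=
    Ideal.dvd_iff_le.mpr (Ideal.le_pow_ramificationIdx')
  have hdiff : P ^ (e - 1) ∣ differentIdeal (𝓞 K) (𝓞 L) :=
    haveI := hp
    pow_sub_one_dvd_differentIdeal (𝓞 K) P e hpbot hdvd
  have hPdvd : P ∣ differentIdeal (𝓞 K) (𝓞 L) :=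
    (dvd_pow_self P (by omega : e - 1 ≠ 0)).trans hdiff
  have hled : differentIdeal (𝓞 K) (𝓞 L) ≤ P := Ideal.le_of_dvd hPdvd
  exact hco P hP (hled d₁) (hled d₂)

open IntermediateField NumberField Polynomial

lemma not_isSquare_of_squarefree {n : ℕ} (hn : Squarefree n) (h1 : n ≠ 1) : ¬ IsSquare n := by
  rintro ⟨t, rfl⟩
  exact h1 (by simpa using Nat.isUnit_iff.mp (hn t (dvd_refl _)))

lemma sqf_mul {a b : ℕ} (ha : a.Prime) (hb : b.Prime) (hab : a ≠ b) : Squarefree (a * b) := by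
  rw [Nat.squarefree_mul_iff]
  exact ⟨(Nat.coprime_primes ha hb).mpr hab, ha.squarefree, hb.squarefree⟩

lemma sqf_mul3 {a b c : ℕ} (ha : a.Prime) (hb : b.Prime) (hc : c.Prime)
    (hab : a ≠ b) (hac : a ≠ c) (hbc : b ≠ c) : Squarefree (a * (b * c)) := by
  rw [Nat.squarefree_mul_iff]
  refine ⟨?_, ha.squarefree, sqf_mul hb hc hbc⟩
  exact Nat.Coprime.mul_right ((Nat.coprime_primes ha hb).mpr hab)
    ((Nat.coprime_primes ha hc).mpr hac)

lemma irr_sqrt_of_squarefree {n : ℕ} (hn : Squarefree n) (h1 : n ≠ 1) :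
    Irrational (Real.sqrt n) := by
  rw [irrational_sqrt_natCast_iff]
  exact not_isSquare_of_squarefree hn h1

/-- Quadratic representation: any element of `F(β)` with `β ^ 2 ∈ F` has the form `a + b β`. -/
lemma mem_adjoin_quadratic {F : Type*} [Field F] [Algebra F ℂ] {β : ℂ} (c : F)
    (hc : algebraMap F ℂ c = β ^ 2) {x : ℂ}
    (hx : x ∈ IntermediateField.adjoin F {β}) :
    ∃ a b : F, x = algebraMap F ℂ a + algebraMap F ℂ b * β := by
  set g : F[X] := X ^ 2 - C c with hg
  have hmonic : g.Monic := by
    simpa [hg] using Polynomial.monic_X_pow_sub_C c (two_ne_zero)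
  have hdeg : g.degree = 2 := by
    rw [hg]
    compute_degree!
  have hroot : Polynomial.aeval β g = 0 := by simp [hg, hc]
  have hint : IsIntegral F β := ⟨g, hmonic, hroot⟩
  rw [show (IntermediateField.adjoin F {β}) = F⟮β⟯ from rfl, ← SetLike.mem_coe,
    ← IntermediateField.coe_toSubalgebra, adjoin_simple_toSubalgebra_of_isAlgebraic hint.isAlgebraic,
    SetLike.mem_coe, Algebra.adjoin_singleton_eq_range_aeval] at hx
  obtain ⟨p, hp⟩ := hx
  have hmod : x = Polynomial.aeval β (p %ₘ g) := by
    conv_lhs => rw [← hp, ← Polynomial.modByMonic_add_div p g]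
    simp [hroot]
  have hdeg2 : (p %ₘ g).degree ≤ 1 := by
    have := Polynomial.degree_modByMonic_lt p hmonic
    rw [hdeg] at this
    exact Order.le_of_lt_succ (by exact_mod_cast this)
  refine ⟨(p %ₘ g).coeff 0, (p %ₘ g).coeff 1, ?_⟩
  conv_lhs => rw [hmod, Polynomial.eq_X_add_C_of_degree_le_one hdeg2]
  rw [map_add, map_mul, Polynomial.aeval_X, Polynomial.aeval_C, Polynomial.aeval_C]; ring

/-- If `√q`, `√n` and `√(n q)` are irrational then `√n ∉ ℚ(√q)`. -/
lemma sqrt_not_mem_adjoin_sqrt {q n : ℕ} (hq : Irrational (Real.sqrt q))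
    (hn : Irrational (Real.sqrt n)) (hnq : Irrational (Real.sqrt (n * q))) :
    ((Real.sqrt n : ℝ) : ℂ) ∉ IntermediateField.adjoin ℚ {((Real.sqrt q : ℝ) : ℂ)} := by
  intro hmem
  have hq2 : algebraMap ℚ ℂ ((q : ℚ)) = ((Real.sqrt q : ℝ) : ℂ) ^ 2 := by
    rw [← Complex.ofReal_pow, Real.sq_sqrt (by positivity)]
    simp
  obtain ⟨a, b, hab⟩ := mem_adjoin_quadratic _ hq2 hmem
  have hab' : (Real.sqrt n : ℝ) = (a : ℝ) + (b : ℝ) * Real.sqrt q := by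
    have : ((Real.sqrt n : ℝ) : ℂ) = (((a : ℝ) + (b : ℝ) * Real.sqrt q : ℝ) : ℂ) := by
      rw [hab]; push_cast; simp [eq_ratCast]
    exact_mod_cast this
  rcases eq_or_ne (b : ℝ) 0 with hb | hb
  · exact hn ⟨a, by rw [hab', hb]; push_cast; ring⟩
  have hsq : (n : ℝ) = a ^ 2 + 2 * a * b * Real.sqrt q + b ^ 2 * q := by
    have h1 : Real.sqrt n ^ 2 = (n : ℝ) := Real.sq_sqrt (by positivity)
    have h2 : Real.sqrt q ^ 2 = (q : ℝ) := Real.sq_sqrt (by positivity)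
    rw [hab'] at h1
    nlinarith [h1, h2]
  rcases eq_or_ne (a : ℝ) 0 with ha | ha
  · refine hnq ⟨b * q, ?_⟩
    have : Real.sqrt (n * q) = Real.sqrt n * Real.sqrt q := by
      push_cast
      rw [Real.sqrt_mul (by positivity)]
    rw [this, hab', ha]
    have h2 : Real.sqrt q * Real.sqrt q = (q : ℝ) := Real.mul_self_sqrt (by positivity)
    push_cast
    rw [zero_add, mul_assoc, h2]
  · refine hq ⟨((n : ℚ) - a ^ 2 - b ^ 2 * q) / (2 * a * b), ?_⟩
    push_cast
    field_simp
    nlinarith [hsq]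

/-- Key: for distinct primes `q, m, n`, `√m ∉ ℚ(√q, √(mn))`. -/
lemma sqrt_not_mem_biquad {q m n : ℕ} (hq : q.Prime) (hm : m.Prime) (hn : n.Prime)
    (hqm : q ≠ m) (hqn : q ≠ n) (hmn : m ≠ n) :
    ((Real.sqrt m : ℝ) : ℂ) ∉ IntermediateField.adjoin ℚ
      {((Real.sqrt q : ℝ) : ℂ), ((Real.sqrt (m * n) : ℝ) : ℂ)} := by
  have hne_mq : m * q ≠ 1 := Nat.ne_of_gt (one_lt_mul_of_lt_of_le hm.one_lt hq.one_le)
  have hne_nq : n * q ≠ 1 := Nat.ne_of_gt (one_lt_mul_of_lt_of_le hn.one_lt hq.one_le)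
  have hne_mn : m * n ≠ 1 := Nat.ne_of_gt (one_lt_mul_of_lt_of_le hm.one_lt hn.one_le)
  have hne_mnq : m * n * q ≠ 1 :=
    Nat.ne_of_gt (one_lt_mul_of_lt_of_le (one_lt_mul_of_lt_of_le hm.one_lt hn.one_le) hq.one_le)
  have hqrr : Irrational (Real.sqrt q) := hq.irrational_sqrt
  have hmrr : Irrational (Real.sqrt m) := hm.irrational_sqrt
  have hnrr : Irrational (Real.sqrt n) := hn.irrational_sqrt
  have hmq : Irrational (Real.sqrt ((m : ℝ) * q)) := by
    rw [show ((m : ℝ) * q) = ((m * q : ℕ) : ℝ) by push_cast; ring]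
    exact irr_sqrt_of_squarefree (sqf_mul hm hq (Ne.symm hqm)) hne_mq
  have hnq : Irrational (Real.sqrt ((n : ℝ) * q)) := by
    rw [show ((n : ℝ) * q) = ((n * q : ℕ) : ℝ) by push_cast; ring]
    exact irr_sqrt_of_squarefree (sqf_mul hn hq (Ne.symm hqn)) hne_nq
  have hmn' : Irrational (Real.sqrt ((m : ℝ) * n)) := by
    rw [show ((m : ℝ) * n) = ((m * n : ℕ) : ℝ) by push_cast; ring]
    exact irr_sqrt_of_squarefree (sqf_mul hm hn hmn) hne_mn
  have hmnq : Irrational (Real.sqrt ((m : ℝ) * n * q)) := by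
    rw [show ((m : ℝ) * n * q) = ((m * n * q : ℕ) : ℝ) by push_cast; ring]
    refine irr_sqrt_of_squarefree ?_ hne_mnq
    have : m * n * q = q * (m * n) := by ring
    rw [this]
    exact sqf_mul3 hq hm hn hqm hqn hmn
  intro hmem
  rw [← Set.singleton_union, ← IntermediateField.adjoin_adjoin_left,
    IntermediateField.mem_restrictScalars] at hmem
  set F₁ := IntermediateField.adjoin ℚ {((Real.sqrt q : ℝ) : ℂ)} with hF₁
  have hcmem : (((m : ℝ) * n : ℝ) : ℂ) ∈ F₁ := by
    push_cast
    exact mul_mem (IntermediateField.natCast_mem F₁ m) (IntermediateField.natCast_mem F₁ n)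
  have hc : algebraMap F₁ ℂ ⟨_, hcmem⟩ = ((Real.sqrt (m * n) : ℝ) : ℂ) ^ 2 := by
    rw [← Complex.ofReal_pow, Real.sq_sqrt (by positivity)]
    rfl
  obtain ⟨a, b, hab⟩ := mem_adjoin_quadratic _ hc hmem
  have haF : (a : ℂ) ∈ F₁ := a.2
  have hbF : (b : ℂ) ∈ F₁ := b.2
  rw [show algebraMap F₁ ℂ a = (a : ℂ) from rfl, show algebraMap F₁ ℂ b = (b : ℂ) from rfl] at hab
  have hsm2 : ((Real.sqrt m : ℝ) : ℂ) ^ 2 = (m : ℂ) := by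
    rw [← Complex.ofReal_pow, Real.sq_sqrt (by positivity)]; push_cast; ring
  have hsmn2 : ((Real.sqrt (m * n) : ℝ) : ℂ) ^ 2 = (m : ℂ) * n := by
    rw [← Complex.ofReal_pow, Real.sq_sqrt (by positivity)]; push_cast; ring
  have hprodr : Real.sqrt m * Real.sqrt ((m : ℝ) * n) = (m : ℝ) * Real.sqrt n := by
    rw [Real.sqrt_mul (by positivity), ← mul_assoc, Real.mul_self_sqrt (by positivity)]
  have hprod : ((Real.sqrt m : ℝ) : ℂ) * ((Real.sqrt (m * n) : ℝ) : ℂ)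
      = (m : ℂ) * ((Real.sqrt n : ℝ) : ℂ) := by
    calc ((Real.sqrt m : ℝ) : ℂ) * ((Real.sqrt (m * n) : ℝ) : ℂ)
        = ((Real.sqrt m * Real.sqrt ((m : ℝ) * n) : ℝ) : ℂ) := by push_cast; ring
      _ = (((m : ℝ) * Real.sqrt n : ℝ) : ℂ) := by rw [hprodr]
      _ = (m : ℂ) * ((Real.sqrt n : ℝ) : ℂ) := by push_cast; ring
  rcases eq_or_ne (b : ℂ) 0 with hb | hb
  · rw [hb, zero_mul, add_zero] at hab
    exact sqrt_not_mem_adjoin_sqrt hqrr hmrr (by push_cast; exact hmq) (hab ▸ haF)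
  rcases eq_or_ne (a : ℂ) 0 with ha | ha
  · rw [ha, zero_add] at hab
    have hm0 : (m : ℂ) ≠ 0 := Nat.cast_ne_zero.mpr hm.pos.ne'
    have key : ((Real.sqrt n : ℝ) : ℂ) = (b : ℂ) * n := by
      have h1 : ((Real.sqrt m : ℝ) : ℂ) * ((Real.sqrt (m * n) : ℝ) : ℂ)
          = (b : ℂ) * ((Real.sqrt (m * n) : ℝ) : ℂ) * ((Real.sqrt (m * n) : ℝ) : ℂ) := by
        rw [← hab]
      rw [hprod, mul_assoc, ← sq, hsmn2] at h1
      apply mul_left_cancel₀ hm0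
      rw [h1]; ring
    refine sqrt_not_mem_adjoin_sqrt hqrr hnrr (by push_cast; exact hnq) ?_
    rw [key]
    exact mul_mem hbF (IntermediateField.natCast_mem F₁ n)
  · have hsq : (m : ℂ) = (a : ℂ) ^ 2 + 2 * a * b * ((Real.sqrt (m * n) : ℝ) : ℂ)
        + (b : ℂ) ^ 2 * ((m : ℂ) * n) := by
      have h1 : ((Real.sqrt m : ℝ) : ℂ) ^ 2 = ((a : ℂ) + (b : ℂ) * ((Real.sqrt (m * n) : ℝ) : ℂ)) ^ 2 := by
        rw [hab]
      rw [hsm2] at h1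
      linear_combination h1 + ((b : ℂ)) ^ 2 * hsmn2
    have key : ((Real.sqrt (m * n) : ℝ) : ℂ)
        = ((m : ℂ) - (a : ℂ) ^ 2 - (b : ℂ) ^ 2 * ((m : ℂ) * n)) / (2 * a * b) := by
      rw [eq_div_iff (by simp [ha, hb])]
      linear_combination -hsq
    have hmemF : ((Real.sqrt ((m : ℝ) * n) : ℝ) : ℂ) ∈ F₁ := by
      rw [show ((Real.sqrt ((m : ℝ) * n) : ℝ) : ℂ) = ((Real.sqrt (m * n) : ℝ) : ℂ) from rfl, key]
      refine div_mem (sub_mem (sub_mem (IntermediateField.natCast_mem F₁ m) (pow_mem haF 2))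
        (mul_mem (pow_mem hbF 2)
          (mul_mem (IntermediateField.natCast_mem F₁ m) (IntermediateField.natCast_mem F₁ n)))) ?_
      exact mul_mem (mul_mem (by exact_mod_cast IntermediateField.natCast_mem F₁ 2) haF) hbF
    refine sqrt_not_mem_adjoin_sqrt (n := m * n) hqrr ?_ ?_ ?_
    · rw [Nat.cast_mul]; exact hmn'
    · rw [show ((m * n : ℕ) : ℝ) * q = (m : ℝ) * n * q by push_cast; ring]; exact hmnq
    · rw [show (((m * n : ℕ) : ℝ)) = ((m : ℝ) * n) by push_cast; ring]; exact hmemF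
open IntermediateField NumberField Polynomial

set_option maxHeartbeats 1000000 in
lemma exists_good_gen (K : IntermediateField ℚ ℂ) [FiniteDimensional ℚ ↥K]
    (S : Set ℂ) (m t : ℕ) (hm : m.Prime) (hmt : m = 4 * t + 1)
    (sm sn : ℂ) (hS : S = {sm, sn})
    (hsm : sm = ((Real.sqrt m : ℝ) : ℂ))
    (hsnint : IsIntegral ℚ sn)
    (hw : sm * sn ∈ K)
    (hsmK : sm ∉ K) :
    ∃ x : 𝓞 ↥(IntermediateField.adjoin ↥K S),
      Algebra.adjoin ↥K
        {(algebraMap (𝓞 ↥(IntermediateField.adjoin ↥K S)) ↥(IntermediateField.adjoin ↥K S) x)}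
        = ⊤ ∧
      ∀ P : Ideal (𝓞 ↥(IntermediateField.adjoin ↥K S)),
        Polynomial.aeval x (Polynomial.derivative (minpoly (𝓞 ↥K) x)) ∈ P →
        ((m : 𝓞 ↥(IntermediateField.adjoin ↥K S)) ∈ P) := by
  subst hS
  set M := IntermediateField.adjoin ↥K {sm, sn} with hMdef
  have hm0 : (m : ℂ) ≠ 0 := Nat.cast_ne_zero.mpr hm.pos.ne'
  have hsm2 : sm ^ 2 = (m : ℂ) := by
    rw [hsm, ← Complex.ofReal_pow, Real.sq_sqrt (by positivity)]
    push_cast; ring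
  have hsmint : IsIntegral ℚ sm := by
    refine ⟨X ^ 2 - C (m : ℚ), ?_, ?_⟩
    · simpa using Polynomial.monic_X_pow_sub_C (R := ℚ) (m : ℚ) (two_ne_zero)
    · simp [hsm2]
  haveI : NumberField ↥K := ⟨⟩
  haveI hFDM : FiniteDimensional ↥K ↥M := by
    apply IntermediateField.finiteDimensional_adjoin
    rintro y hy
    rcases hy with rfl | hy
    · exact hsmint.tower_top
    · rw [Set.mem_singleton_iff] at hy; subst hy; exact hsnint.tower_top
  haveI : FiniteDimensional ℚ ↥M := FiniteDimensional.trans ℚ ↥K ↥M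
  haveI : NumberField ↥M := ⟨⟩
  -- the generator θ = (1 + √m)/2
  have hsmM : sm ∈ M := subset_adjoin _ _ (Set.mem_insert _ _)
  have h2M : (2 : ℂ) ∈ M := by exact_mod_cast IntermediateField.natCast_mem M 2
  have hθM : (1 + sm) / 2 ∈ M := div_mem (add_mem (one_mem M) hsmM) h2M
  set θ : ↥M := ⟨(1 + sm) / 2, hθM⟩ with hθdef
  have hθc : (algebraMap ↥M ℂ) θ = (1 + sm) / 2 := rfl
  have hmc : (m : ℂ) = 4 * t + 1 := by exact_mod_cast congrArg (Nat.cast : ℕ → ℂ) hmt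
  -- θ is integral over ℤ
  have hθint : IsIntegral ℤ θ := by
    refine ⟨X ^ 2 - X - C (t : ℤ), ?_, ?_⟩
    · have h := Polynomial.monic_X_pow_sub (p := X + C (t : ℤ)) (n := 2)
        (by rw [Polynomial.degree_X_add_C]; decide)
      rwa [sub_add_eq_sub_sub] at h
    · rw [← Polynomial.aeval_def]
      apply (algebraMap ↥M ℂ).injective
      rw [map_zero, ← Polynomial.aeval_algebraMap_apply]
      simp only [map_sub, map_pow, Polynomial.aeval_X, Polynomial.aeval_C, hθc]
      push_cast
      linear_combination (hsm2 + hmc) / 4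
  set x : 𝓞 ↥M := ⟨θ, hθint⟩ with hxdef
  have hxM : algebraMap (𝓞 ↥M) ↥M x = θ := rfl
  have hθK : IsIntegral ↥K θ := hθint.tower_top
  have hsm_eq : sm = 2 * ((1 + sm) / 2) - 1 := by ring
  -- generation
  have hTopIF : IntermediateField.adjoin ↥K {θ} = (⊤ : IntermediateField ↥K ↥M) := by
    apply IntermediateField.map_injective M.val
    rw [IntermediateField.adjoin_map, Set.image_singleton]
    have hvt : (⊤ : IntermediateField ↥K ↥M).map M.val = M :=
      IntermediateField.lift_top (F := ↥K) M
    rw [hvt]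
    have hval : M.val θ = (1 + sm) / 2 := rfl
    rw [hval]
    apply le_antisymm
    · exact adjoin_le_iff.mpr (by rintro y (rfl : y = (1 + sm) / 2); exact hθM)
    · conv_lhs => rw [hMdef]
      apply adjoin_le_iff.mpr
      have hθmem : (1 + sm) / 2 ∈ IntermediateField.adjoin ↥K {(1 + sm) / 2} :=
        subset_adjoin _ _ rfl
      have h2mem : (2 : ℂ) ∈ IntermediateField.adjoin ↥K {(1 + sm) / 2} := by
        exact_mod_cast IntermediateField.natCast_mem _ 2
      have hsmmem : sm ∈ IntermediateField.adjoin ↥K {(1 + sm) / 2} := by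
        have h := sub_mem (mul_mem h2mem hθmem) (one_mem (IntermediateField.adjoin ↥K {(1 + sm) / 2}))
        rwa [show 2 * ((1 + sm) / 2) - 1 = sm by ring] at h
      rintro y hy
      rcases hy with rfl | hy
      · exact hsmmem
      · rw [Set.mem_singleton_iff] at hy
        rw [hy]
        have hwmem : sm * sn ∈ IntermediateField.adjoin ↥K {(1 + sm) / 2} :=
          IntermediateField.algebraMap_mem _ (⟨sm * sn, hw⟩ : ↥K)
        have heq : sn = (sm * sn) * sm / (m : ℂ) := by
          rw [eq_div_iff hm0]
          linear_combination (-sn) * hsm2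
        rw [heq]
        exact div_mem (mul_mem hwmem hsmmem) (by exact_mod_cast IntermediateField.natCast_mem _ m)
  have hgen : Algebra.adjoin ↥K {(algebraMap (𝓞 ↥M) ↥M x)} = ⊤ := by
    rw [hxM, ← adjoin_simple_toSubalgebra_of_isAlgebraic hθK.isAlgebraic, hTopIF]
    exact IntermediateField.top_toSubalgebra
  -- minpoly over K
  have hint𝓞 : IsIntegral (𝓞 ↥K) x := Algebra.IsIntegral.isIntegral x
  have hnotrange : θ ∉ Set.range (algebraMap ↥K ↥M) := by
    rintro ⟨y, hy⟩
    apply hsmK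
    have h1 : algebraMap ↥K ℂ y = (1 + sm) / 2 := by
      rw [IsScalarTower.algebraMap_apply ↥K ↥M ℂ, hy, hθc]
    have h2 : sm = algebraMap ↥K ℂ (2 * y - 1) := by
      rw [map_sub, map_mul, map_one, h1, map_ofNat]
      ring
    rw [h2]
    exact (2 * y - 1).2
  set gK : Polynomial ↥K := X ^ 2 - X - C (t : ↥K) with hgKdef
  have hmono : gK.Monic := by
    have h := Polynomial.monic_X_pow_sub (p := X + C (t : ↥K)) (n := 2)
      (by rw [Polynomial.degree_X_add_C]; decide)
    rwa [sub_add_eq_sub_sub] at h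
  have hdegK : gK.natDegree = 2 := by
    rw [hgKdef]
    compute_degree!
  have hrootK : Polynomial.aeval θ gK = 0 := by
    apply (algebraMap ↥M ℂ).injective
    rw [map_zero, ← Polynomial.aeval_algebraMap_apply]
    simp only [hgKdef, map_sub, map_pow, Polynomial.aeval_X, Polynomial.aeval_C, hθc,
      map_natCast]
    push_cast
    linear_combination (hsm2 + hmc) / 4
  have hdvd : minpoly ↥K θ ∣ gK := minpoly.dvd _ _ hrootK
  have hdeg_ge : 2 ≤ (minpoly ↥K θ).natDegree := by
    refine (minpoly.two_le_natDegree_iff hθK).mpr ?_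
    rintro ⟨y, hy⟩
    exact hnotrange ⟨y, hy⟩
  have hminK : minpoly ↥K θ = gK := by
    obtain ⟨u, hu⟩ := hdvd
    have hu0 : u ≠ 0 := by
      rintro rfl
      rw [mul_zero] at hu
      exact hmono.ne_zero hu
    have hdeg_u : u.natDegree = 0 := by
      have h := congrArg Polynomial.natDegree hu
      rw [Polynomial.natDegree_mul (minpoly.ne_zero hθK) hu0, hdegK] at h
      omega
    have hulead : u.leadingCoeff = 1 := by
      have h := congrArg Polynomial.leadingCoeff hu
      rw [Polynomial.leadingCoeff_mul, (minpoly.monic hθK).leadingCoeff, one_mul,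
        hmono.leadingCoeff] at h
      exact h.symm
    have hu1 : u = 1 := by
      have := Polynomial.eq_C_of_natDegree_eq_zero hdeg_u
      rw [this]
      rw [Polynomial.leadingCoeff, hdeg_u] at hulead
      rw [hulead, map_one]
    rw [hu1, mul_one] at hu
    exact hu.symm
  -- the derivative evaluated at θ equals √m
  have hd : algebraMap (𝓞 ↥M) ↥M (Polynomial.aeval x (Polynomial.derivative (minpoly (𝓞 ↥K) x)))
      = ⟨sm, hsmM⟩ := by
    have hfield : minpoly ↥K (algebraMap (𝓞 ↥M) ↥M x)
        = (minpoly (𝓞 ↥K) x).map (algebraMap (𝓞 ↥K) ↥K) :=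
      minpoly.isIntegrallyClosed_eq_field_fractions ↥K ↥M hint𝓞
    rw [hxM] at hfield
    have step1 : algebraMap (𝓞 ↥M) ↥M (Polynomial.aeval x (Polynomial.derivative (minpoly (𝓞 ↥K) x)))
        = Polynomial.aeval θ (Polynomial.derivative (minpoly (𝓞 ↥K) x)) := by
      rw [← Polynomial.aeval_algebraMap_apply, hxM]
    rw [step1, ← Polynomial.aeval_map_algebraMap ↥K, ← Polynomial.derivative_map, ← hfield, hminK]
    apply (algebraMap ↥M ℂ).injective
    rw [← Polynomial.aeval_algebraMap_apply]
    have hder : Polynomial.derivative gK = C 2 * X - 1 := by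
      simp [hgKdef]
      try ring
      exact (map_ofNat C 2).symm
    rw [hder]
    simp only [map_sub, map_mul, Polynomial.aeval_X, Polynomial.aeval_C, map_one, hθc, map_ofNat]
    show (2 : ℂ) * ((1 + sm) / 2) - 1 = algebraMap ↥M ℂ ⟨sm, hsmM⟩
    rw [show algebraMap ↥M ℂ ⟨sm, hsmM⟩ = sm from rfl]
    ring
  refine ⟨x, hgen, ?_⟩
  intro P hPd
  have hdd : (Polynomial.aeval x (Polynomial.derivative (minpoly (𝓞 ↥K) x)))
      * (Polynomial.aeval x (Polynomial.derivative (minpoly (𝓞 ↥K) x))) = (m : 𝓞 ↥M) := by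
    apply IsFractionRing.injective (𝓞 ↥M) ↥M
    rw [map_mul, hd, map_natCast]
    apply Subtype.ext
    show sm * sm = ((m : ↥M) : ℂ)
    rw [show ((m : ↥M) : ℂ) = (m : ℂ) by push_cast; ring]
    linear_combination hsm2
  rw [← hdd]
  exact P.mul_mem_left _ hPd

/-- An extension `M/K` of number fields (inside `ℂ`) is unramified at every
finite prime: every nonzero prime (i.e. maximal) ideal of `𝓞 K` has
ramification index `1` at every prime of `𝓞 M` above it. -/
def UnramifiedAllFinitePrimes (K : IntermediateField ℚ ℂ)
    (M : IntermediateField K ℂ) : Prop :=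
  ∀ p : Ideal (𝓞 K), p.IsMaximal → ∀ P : Ideal (𝓞 M), P.IsMaximal →
    Ideal.comap (algebraMap (𝓞 K) (𝓞 M)) P = p →
    Ideal.ramificationIdx' p P = 1

/-- For distinct primes `q ≡ 3 (mod 4)`, `k ≡ r ≡ 1 (mod 4)`, the extension
`ℚ(√q, √k, √r) / ℚ(√q, √(kr))` is unramified at every finite prime. -/
theorem stmt6 (q k r : ℕ) (hq : q.Prime) (hk : k.Prime) (hr : r.Prime)
    (hqk : q ≠ k) (hqr : q ≠ r) (hkr : k ≠ r)
    (hq4 : q % 4 = 3) (hk4 : k % 4 = 1) (hr4 : r % 4 = 1) :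
    UnramifiedAllFinitePrimes
      (IntermediateField.adjoin ℚ
        {((Real.sqrt q : ℝ) : ℂ), ((Real.sqrt (k * r) : ℝ) : ℂ)})
      (IntermediateField.adjoin
        (IntermediateField.adjoin ℚ
          {((Real.sqrt q : ℝ) : ℂ), ((Real.sqrt (k * r) : ℝ) : ℂ)})
        {((Real.sqrt k : ℝ) : ℂ), ((Real.sqrt r : ℝ) : ℂ)}) := by
  set sq : ℂ := ((Real.sqrt q : ℝ) : ℂ) with hsqdef
  set skr : ℂ := ((Real.sqrt (k * r) : ℝ) : ℂ) with hskrdef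
  set sk : ℂ := ((Real.sqrt k : ℝ) : ℂ) with hskdef
  set sr : ℂ := ((Real.sqrt r : ℝ) : ℂ) with hsrdef
  set K := IntermediateField.adjoin ℚ {sq, skr} with hKdef
  -- squares
  have hsq2 : sq ^ 2 = (q : ℂ) := by
    rw [hsqdef, ← Complex.ofReal_pow, Real.sq_sqrt (by positivity)]; push_cast; ring
  have hskr2 : skr ^ 2 = (k : ℂ) * r := by
    rw [hskrdef, ← Complex.ofReal_pow, Real.sq_sqrt (by positivity)]; push_cast; ring
  have hsk2 : sk ^ 2 = (k : ℂ) := by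
    rw [hskdef, ← Complex.ofReal_pow, Real.sq_sqrt (by positivity)]; push_cast; ring
  have hsr2 : sr ^ 2 = (r : ℂ) := by
    rw [hsrdef, ← Complex.ofReal_pow, Real.sq_sqrt (by positivity)]; push_cast; ring
  -- integrality over ℚ
  have hint : ∀ (s : ℂ) (c : ℚ), s ^ 2 = (c : ℂ) → IsIntegral ℚ s := by
    intro s c hc
    refine ⟨X ^ 2 - C c, ?_, ?_⟩
    · simpa using Polynomial.monic_X_pow_sub_C (R := ℚ) c (two_ne_zero)
    · rw [← Polynomial.aeval_def]; simp [hc]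
  have hsqint : IsIntegral ℚ sq := hint sq q (by exact_mod_cast hsq2)
  have hskrint : IsIntegral ℚ skr := hint skr ((k : ℚ) * r) (by push_cast; exact_mod_cast hskr2)
  have hskint : IsIntegral ℚ sk := hint sk k (by exact_mod_cast hsk2)
  have hsrint : IsIntegral ℚ sr := hint sr r (by exact_mod_cast hsr2)
  haveI : FiniteDimensional ℚ ↥K := by
    apply IntermediateField.finiteDimensional_adjoin
    rintro y hy
    rcases hy with rfl | hy
    · exact hsqint
    · rw [Set.mem_singleton_iff] at hy; rw [hy]; exact hskrint
  haveI : NumberField ↥K := ⟨⟩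
  -- non-membership facts
  have hkK : sk ∉ K := sqrt_not_mem_biquad hq hk hr hqk hqr hkr
  have hrK : sr ∉ K := by
    have h := sqrt_not_mem_biquad hq hr hk hqr hqk (Ne.symm hkr)
    rwa [show Real.sqrt ((r : ℝ) * k) = Real.sqrt ((k : ℝ) * r) by rw [mul_comm]] at h
  -- the product √k √r = √(kr) lies in K
  have hskrK : skr ∈ K := subset_adjoin _ _ (Set.mem_insert_of_mem _ rfl)
  have hprodeq : sk * sr = skr := by
    rw [hskdef, hsrdef, hskrdef, ← Complex.ofReal_mul, Real.sqrt_mul (by positivity)]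
  have hw1 : sk * sr ∈ K := by rw [hprodeq]; exact hskrK
  have hw2 : sr * sk ∈ K := by rw [mul_comm]; exact hw1
  -- mod-4 decompositions
  obtain ⟨tk, htk⟩ : ∃ t, k = 4 * t + 1 := ⟨k / 4, by omega⟩
  obtain ⟨tr, htr⟩ : ∃ t, r = 4 * t + 1 := ⟨r / 4, by omega⟩
  -- the two generators
  obtain ⟨x₁, hgen₁, hP₁⟩ :=
    exists_good_gen K {sk, sr} k tk hk htk sk sr rfl rfl hsrint hw1 hkK
  obtain ⟨x₂, hgen₂, hP₂⟩ :=
    exists_good_gen K {sk, sr} r tr hr htr sr sk (Set.pair_comm sk sr) rfl hskint hw2 hrK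
  -- instances for M
  haveI : FiniteDimensional ↥K ↥(IntermediateField.adjoin ↥K {sk, sr}) := by
    apply IntermediateField.finiteDimensional_adjoin
    rintro y hy
    rcases hy with rfl | hy
    · exact hskint.tower_top
    · rw [Set.mem_singleton_iff] at hy; rw [hy]; exact hsrint.tower_top
  haveI : FiniteDimensional ℚ ↥(IntermediateField.adjoin ↥K {sk, sr}) :=
    FiniteDimensional.trans ℚ ↥K ↥(IntermediateField.adjoin ↥K {sk, sr})
  haveI : NumberField ↥(IntermediateField.adjoin ↥K {sk, sr}) := ⟨⟩
  refine unram_general x₁ x₂ hgen₁ hgen₂ ?_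
  intro P hPmax h1 h2
  have hk' := hP₁ P h1
  have hr' := hP₂ P h2
  have hcop : IsCoprime (k : ℤ) (r : ℤ) :=
    Nat.isCoprime_iff_coprime.mpr ((Nat.coprime_primes hk hr).mpr hkr)
  obtain ⟨a, b, hab⟩ := hcop
  have hone : (1 : 𝓞 ↥(IntermediateField.adjoin ↥K {sk, sr})) ∈ P := by
    have hcast := congrArg (algebraMap ℤ (𝓞 ↥(IntermediateField.adjoin ↥K {sk, sr}))) hab
    push_cast at hcast
    rw [← hcast]
    exact P.add_mem (P.mul_mem_left _ hk') (P.mul_mem_left _ hr')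
  exact hPmax.ne_top ((Ideal.eq_top_iff_one P).mpr hone)
end

section
/- For every prime p ≥ 5, there exists a prime q < p such that q ≡ 3 (mod 4) and q is a quadratic nonresidue modulo p, i.e., the Legendre symbol (q/p) = -1. -/
/-- Every natural number `≡ 3 (mod 4)` has a prime factor `≡ 3 (mod 4)`. -/
lemma ex3mod4 : ∀ n : ℕ, n % 4 = 3 → ∃ q : ℕ, q.Prime ∧ q ∣ n ∧ q % 4 = 3 := by
  intro n
  induction n using Nat.strong_induction_on with
  | _ n ih =>
    intro hn
    have hn1 : n ≠ 1 := by omega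
    obtain ⟨q, hq, hqd⟩ := Nat.exists_prime_and_dvd hn1
    have hq2 : q ≠ 2 := by
      rintro rfl
      obtain ⟨m, hm⟩ := hqd
      omega
    have hqodd : q % 2 = 1 := hq.eq_two_or_odd.resolve_left hq2
    rcases (by omega : q % 4 = 1 ∨ q % 4 = 3) with h1 | h3
    · obtain ⟨m, hm⟩ := hqd
      have hmm := Nat.mul_mod q m 4
      rw [h1, one_mul] at hmm
      rw [← hm] at hmm
      have hm4 : m % 4 = 3 := by omega
      have hm0 : 0 < m := by
        rcases Nat.eq_zero_or_pos m with rfl | h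
        · omega
        · exact h
      have hmn : m < n := by
        have h2q : 2 ≤ q := hq.two_le
        calc m < 2 * m := by omega
        _ ≤ q * m := Nat.mul_le_mul_right m h2q
        _ = n := hm.symm
      obtain ⟨r, hr1, hr2, hr3⟩ := ih m hmn hm4
      exact ⟨r, hr1, hr2.trans (Dvd.intro_left q hm.symm), hr3⟩
    · exact ⟨q, hq, hqd, h3⟩

lemma sq4 (u : ℤ) : u ^ 2 % 4 = 0 ∨ u ^ 2 % 4 = 1 := by
  rcases Int.even_or_odd u with ⟨m, hm⟩ | ⟨m, hm⟩
  · left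
    have h : u ^ 2 = 4 * (m * m) := by rw [hm]; ring
    rw [h]
    exact Int.mul_emod_right 4 (m * m)
  · right
    have h : u ^ 2 = 1 + 4 * (m * m + m) := by rw [hm]; ring
    rw [h, Int.add_mul_emod_self_left]
    norm_num

/-- If `p ≡ 1 (mod 4)` and an odd `w` is of the shape `u² + p v²`, then `w ≡ 1 (mod 4)`. -/
lemma key4 (p w u v : ℤ) (hp : p % 4 = 1) (hw : w = u ^ 2 + p * v ^ 2)
    (hodd : w % 2 = 1) : w % 4 = 1 := by
  have hu := sq4 u
  have hv := sq4 v
  have h1 : (p * v ^ 2) % 4 = (p % 4) * (v ^ 2 % 4) % 4 := Int.mul_emod p (v ^ 2) 4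
  have h2 : w % 4 = ((u ^ 2) % 4 + (p * v ^ 2) % 4) % 4 := by
    rw [hw]; exact Int.add_emod _ _ _
  rw [hp] at h1
  rcases hu with hu | hu <;> rcases hv with hv | hv <;>
    rw [hu] at h2 <;> rw [hv] at h1 <;> omega

/-- Reduction of positive definite binary quadratic forms of discriminant `-4p`,
tracking a represented value `Q`. -/
lemma reduceForm (p Q : ℤ) (_hp : 0 < p) :
    ∀ n : ℕ, ∀ a s c : ℤ, a.toNat ≤ n → 0 < a → s ^ 2 + p = a * c →
    (∃ x y : ℤ, a * x ^ 2 + 2 * s * x * y + c * y ^ 2 = Q) →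
    ∃ A S C : ℤ, 0 < A ∧ A ≤ C ∧ 4 * S ^ 2 ≤ A ^ 2 ∧ S ^ 2 + p = A * C ∧
      ∃ x y : ℤ, A * x ^ 2 + 2 * S * x * y + C * y ^ 2 = Q := by
  intro n
  induction n with
  | zero =>
    intro a s c ha0 ha _ _
    omega
  | succ n ih =>
    intro a s c han ha hsc hrep
    set r := s % a with hrdef
    have hr0 : 0 ≤ r := Int.emod_nonneg s (ne_of_gt ha)
    have hr1 : r < a := Int.emod_lt_of_pos s ha
    set s' : ℤ := if 2 * r ≤ a then r else r - a with hs'def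
    have hbound : 4 * s' ^ 2 ≤ a ^ 2 := by
      rw [hs'def]
      split_ifs with h
      · nlinarith
      · nlinarith
    have hcong : a ∣ s' - s := by
      have h1 : r - s = -(a * (s / a)) := by
        rw [hrdef, Int.emod_def]; ring
      have h2 : a ∣ r - s := by rw [h1]; exact (dvd_mul_right a (s / a)).neg_right
      rw [hs'def]
      split_ifs
      · exact h2
      · have : r - a - s = (r - s) + a * (-1) := by ring
        rw [this]
        exact dvd_add h2 (dvd_mul_right a (-1))
    obtain ⟨k, hk⟩ : ∃ k : ℤ, s' = s + a * k := by
      obtain ⟨k, hk⟩ := hcong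
      exact ⟨k, by linarith⟩
    set c' := c + 2 * s * k + a * k ^ 2 with hc'def
    have hsc' : s' ^ 2 + p = a * c' := by
      rw [hk, hc'def]; linear_combination hsc
    have hc'pos : 0 < c' := by
      by_contra h
      push_neg at h
      nlinarith [mul_nonneg ha.le (neg_nonneg.mpr h), sq_nonneg s']
    have hrep' : ∃ x y : ℤ, a * x ^ 2 + 2 * s' * x * y + c' * y ^ 2 = Q := by
      obtain ⟨x, y, hxy⟩ := hrep
      refine ⟨x - k * y, y, ?_⟩
      rw [hk, hc'def]
      linear_combination hxy
    by_cases hac : a ≤ c'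
    · exact ⟨a, s', c', ha, hac, hbound, hsc', hrep'⟩
    · push_neg at hac
      refine ih c' (-s') a ?_ hc'pos (by linear_combination hsc') ?_
      · omega
      · obtain ⟨x, y, hxy⟩ := hrep'
        exact ⟨y, -x, by linear_combination hxy⟩

/-- From a number `m ≡ 3 (mod 4)`, `0 < m < p`, with `-p` a square mod `m`,
produce the desired prime. -/
lemma finish1 (p : ℕ) (hp : p.Prime) (hp4 : p % 4 = 1) (_hp5 : 5 ≤ p) (m S : ℤ)
    (hm : 0 < m) (hm4 : m % 4 = 3) (hmp : m < (p : ℤ)) (hdvd : m ∣ S ^ 2 + (p : ℤ)) :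
    ∃ q : ℕ, q.Prime ∧ q < p ∧ q % 4 = 3 ∧ @legendreSym p ⟨hp⟩ q = -1 := by
  haveI : Fact p.Prime := ⟨hp⟩
  obtain ⟨q, hqP, hqdvd, hq4⟩ := ex3mod4 m.toNat (by omega)
  haveI : Fact q.Prime := ⟨hqP⟩
  have hq2 : q ≠ 2 := by omega
  have hqm : (q : ℤ) ∣ m := by
    have h1 : (q : ℤ) ∣ (m.toNat : ℤ) := Int.natCast_dvd_natCast.mpr hqdvd
    rwa [Int.toNat_of_nonneg hm.le] at h1
  have hqlt : q < p := by
    have h1 : q ≤ m.toNat := Nat.le_of_dvd (by omega) hqdvd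
    omega
  have hqS : (q : ℤ) ∣ S ^ 2 + (p : ℤ) := hqm.trans hdvd
  have hqnotp : ¬(q : ℤ) ∣ (p : ℤ) := by
    intro h
    have h1 : q ∣ p := Int.ofNat_dvd.mp h
    exact absurd ((Nat.prime_dvd_prime_iff_eq hqP hp).mp h1) (by omega)
  have h1 : legendreSym q (-(p : ℤ)) = 1 := by
    rw [legendreSym.eq_one_iff]
    · refine ⟨((S : ZMod q)), ?_⟩
      have h0 : ((S ^ 2 + (p : ℤ) : ℤ) : ZMod q) = 0 :=
        (ZMod.intCast_zmod_eq_zero_iff_dvd _ _).mpr hqS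
      push_cast at h0 ⊢
      linear_combination -h0
    · rw [Int.cast_neg, neg_ne_zero]
      intro h
      exact hqnotp ((ZMod.intCast_zmod_eq_zero_iff_dvd _ _).mp h)
  have h2 : legendreSym q ((p : ℕ) : ℤ) = -1 := by
    have hmul := legendreSym.mul q (-1) (-(p : ℤ))
    rw [show ((-1 : ℤ) * -(p : ℤ)) = ((p : ℕ) : ℤ) by ring] at hmul
    rw [hmul, h1, legendreSym.at_neg_one hq2, ZMod.χ₄_nat_three_mod_four hq4]
    ring
  refine ⟨q, hqP, hqlt, hq4, ?_⟩
  rw [← legendreSym.quadratic_reciprocity_one_mod_four hp4 hq2]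
  exact h2

set_option maxHeartbeats 2000000 in
/-- The case `p ≡ 1 (mod 4)`. -/
lemma main1 (p : ℕ) (hp : p.Prime) (hp5 : 5 ≤ p) (hp4 : p % 4 = 1) :
    ∃ q : ℕ, q.Prime ∧ q < p ∧ q % 4 = 3 ∧ @legendreSym p ⟨hp⟩ q = -1 := by
  haveI : Fact p.Prime := ⟨hp⟩
  have hp2 : p ≠ 2 := by omega
  have hchar : ringChar (ZMod p) ≠ 2 := by
    rw [ZMod.ringChar_zmod_n]; exact hp2
  obtain ⟨b, hb⟩ := FiniteField.exists_nonsquare hchar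
  have hb0 : b ≠ 0 := by
    rintro rfl
    exact hb ⟨0, (mul_zero 0).symm⟩
  set t := b.val with ht
  have htp : t < p := ZMod.val_lt b
  have ht0 : 0 < t := by
    rcases Nat.eq_zero_or_pos t with h | h
    · exact absurd ((ZMod.val_eq_zero b).mp h) hb0
    · exact h
  set k := (7 - t % 4) % 4 with hk
  set a := t + p * k with ha
  have hpk : p * k % 4 = k % 4 := by
    have h1 := Nat.mul_mod p k 4
    rw [hp4, one_mul] at h1
    omega
  have ha4 : a % 4 = 3 := by
    have h1 := Nat.add_mod t (p * k) 4
    omega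
  have hpa : ¬ p ∣ a := by
    intro h
    have h2 : p ∣ t := by
      have h3 := Nat.dvd_sub h (Dvd.intro k rfl)
      simpa [ha] using h3
    exact absurd (Nat.le_of_dvd ht0 h2) (by omega)
  have hcop : Nat.Coprime a (4 * p) := by
    apply Nat.Coprime.mul_right
    · have h2 : Nat.Coprime a 2 := Nat.coprime_two_right.mpr (Nat.odd_iff.mpr (by omega))
      have := h2.pow_right 2
      norm_num at this
      exact this
    · exact Nat.coprime_comm.mp ((hp.coprime_iff_not_dvd).mpr hpa)
  haveI : NeZero (4 * p) := ⟨by positivity⟩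
  have hunit : IsUnit ((a : ℕ) : ZMod (4 * p)) := (ZMod.isUnit_iff_coprime a (4 * p)).mpr hcop
  obtain ⟨Q, hQgt, hQp, hQmod⟩ := Nat.forall_exists_prime_gt_and_eq_mod hunit p
  haveI : Fact Q.Prime := ⟨hQp⟩
  have hQa : Q ≡ a [MOD 4 * p] := (ZMod.natCast_eq_natCast_iff _ _ _).mp hQmod
  have hQ4 : Q % 4 = 3 := by
    have h4 : Q ≡ a [MOD 4] := hQa.of_dvd ⟨p, rfl⟩
    have := h4
    unfold Nat.ModEq at this
    omega
  have hQ2 : Q ≠ 2 := by omega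
  have hQZp : ((Q : ℕ) : ZMod p) = b := by
    have h4 : Q ≡ a [MOD p] := hQa.of_dvd ⟨4, mul_comm 4 p⟩
    have h5 : ((Q : ℕ) : ZMod p) = ((a : ℕ) : ZMod p) := (ZMod.natCast_eq_natCast_iff _ _ _).mpr h4
    rw [h5, ha]
    push_cast
    rw [ZMod.natCast_self]
    simp [ht, ZMod.natCast_zmod_val]
  have hlegQ : legendreSym p ((Q : ℕ) : ℤ) = -1 := by
    rw [legendreSym.eq_neg_one_iff]
    have : (((Q : ℕ) : ℤ) : ZMod p) = ((Q : ℕ) : ZMod p) := by push_cast; rfl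
    rw [this, hQZp]
    exact hb
  have hlegQp : legendreSym Q ((p : ℕ) : ℤ) = -1 := by
    rw [legendreSym.quadratic_reciprocity_one_mod_four hp4 hQ2]
    exact hlegQ
  have hQnp : (((p : ℕ) : ℤ) : ZMod Q) ≠ 0 := by
    intro h
    have h1 : (Q : ℤ) ∣ ((p : ℕ) : ℤ) := (ZMod.intCast_zmod_eq_zero_iff_dvd _ _).mp h
    have h2 : Q ∣ p := Int.ofNat_dvd.mp h1
    have := Nat.le_of_dvd (by omega) h2
    omega
  have hsq : IsSquare ((-(p : ℤ) : ℤ) : ZMod Q) := by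
    have h1 : legendreSym Q (-(p : ℤ)) = 1 := by
      have hmul := legendreSym.mul Q (-1) ((p : ℕ) : ℤ)
      rw [show ((-1 : ℤ) * ((p : ℕ) : ℤ)) = -(p : ℤ) by ring] at hmul
      rw [hmul, hlegQp, legendreSym.at_neg_one hQ2, ZMod.χ₄_nat_three_mod_four hQ4]
      ring
    refine (legendreSym.eq_one_iff Q ?_).mp h1
    rw [Int.cast_neg, neg_ne_zero]
    exact hQnp
  obtain ⟨z, hz⟩ := hsq
  set s : ℤ := (z.val : ℤ) with hs
  have hdvd : (Q : ℤ) ∣ s ^ 2 + (p : ℤ) := by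
    rw [← ZMod.intCast_zmod_eq_zero_iff_dvd]
    have hzz : ((s : ℤ) : ZMod Q) = z := by
      rw [hs]
      push_cast
      exact ZMod.natCast_zmod_val z
    push_cast
    rw [show ((z.val : ℤ) : ZMod Q) = z from hzz]
    have : ((-(p : ℤ) : ℤ) : ZMod Q) = z * z := hz
    push_cast at this
    linear_combination -this
  obtain ⟨c₀, hc₀⟩ := hdvd
  have hppos : (0 : ℤ) < (p : ℤ) := by exact_mod_cast hp.pos
  have hQpos : (0 : ℤ) < (Q : ℤ) := by exact_mod_cast hQp.pos
  obtain ⟨A, S, C, hA0, hAC, hS, hACeq, x, y, hxy⟩ :=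
    reduceForm (p : ℤ) (Q : ℤ) hppos (Q : ℕ) (Q : ℤ) s c₀ (by omega) hQpos hc₀
      ⟨1, 0, by ring⟩
  have hQoddZ : (Q : ℤ) % 2 = 1 := by omega
  have hQ4Z : (Q : ℤ) % 4 = 3 := by omega
  have hp4Z : ((p : ℕ) : ℤ) % 4 = 1 := by omega
  have hp5Z : (5 : ℤ) ≤ (p : ℤ) := by exact_mod_cast hp5
  have hC0 : 0 < C := lt_of_lt_of_le hA0 hAC
  rcases Int.even_or_odd A with hev | hodd
  · -- A even, use C
    have hCodd : C % 2 = 1 := by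
      rcases Int.even_or_odd C with hevC | hoddC
      · exfalso
        obtain ⟨a', ha'⟩ := hev
        obtain ⟨c', hc'⟩ := hevC
        have h4AC : A * C = 4 * (a' * c') := by rw [ha', hc']; ring
        have h4 : (A * C) % 4 = 0 := by rw [h4AC]; exact Int.mul_emod_right 4 _
        have hSS := sq4 S
        have := hACeq
        omega
      · exact Int.odd_iff.mp hoddC
    have hid : C * (Q : ℤ) = (S * x + C * y) ^ 2 + (p : ℤ) * x ^ 2 := by
      linear_combination (-C) * hxy - x ^ 2 * hACeq
    have hw : (C * (Q : ℤ)) % 2 = 1 := by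
      have := Int.mul_emod C (Q : ℤ) 2
      rw [hCodd, hQoddZ] at this
      omega
    have h4 : (C * (Q : ℤ)) % 4 = 1 := key4 (p : ℤ) _ _ _ hp4Z hid hw
    have hC4 : C % 4 = 3 := by
      have := Int.mul_emod C (Q : ℤ) 4
      rw [hQ4Z] at this
      omega
    have hA2 : 2 ≤ A := by
      obtain ⟨a', ha'⟩ := hev
      omega
    have hCp : C < (p : ℤ) := by
      have h1 : A * A ≤ A * C := mul_le_mul_of_nonneg_left hAC hA0.le
      have h2 : 2 * C ≤ A * C := mul_le_mul_of_nonneg_right hA2 hC0.le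
      nlinarith
    exact finish1 p hp hp4 hp5 C S hC0 hC4 hCp ⟨A, by linear_combination hACeq⟩
  · -- A odd
    have hAodd : A % 2 = 1 := Int.odd_iff.mp hodd
    have hid : A * (Q : ℤ) = (A * x + S * y) ^ 2 + (p : ℤ) * y ^ 2 := by
      linear_combination (-A) * hxy - y ^ 2 * hACeq
    have hw : (A * (Q : ℤ)) % 2 = 1 := by
      have := Int.mul_emod A (Q : ℤ) 2
      rw [hAodd, hQoddZ] at this
      omega
    have h4 : (A * (Q : ℤ)) % 4 = 1 := key4 (p : ℤ) _ _ _ hp4Z hid hw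
    have hA4 : A % 4 = 3 := by
      have := Int.mul_emod A (Q : ℤ) 4
      rw [hQ4Z] at this
      omega
    have e1 : A ^ 2 ≤ A * C := by nlinarith [mul_le_mul_of_nonneg_left hAC hA0.le]
    have h3A : 3 * A ^ 2 ≤ 4 * (p : ℤ) := by linarith
    have hAp : A < (p : ℤ) := by
      by_contra hcon
      push_neg at hcon
      have h2 : (p : ℤ) * (p : ℤ) ≤ A * A :=
        mul_le_mul hcon hcon hppos.le (le_trans hppos.le hcon)
      nlinarith [h2, h3A, hp5Z]
    exact finish1 p hp hp4 hp5 A S hA0 hA4 hAp ⟨C, by linear_combination hACeq⟩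

/-- Pollack's theorem: for every prime `p ≥ 5` there is a prime `q < p` with
`q ≡ 3 (mod 4)` which is a quadratic nonresidue mod `p`. -/
theorem stmt12 (p : ℕ) (hp : p.Prime) (hp5 : 5 ≤ p) :
    ∃ q : ℕ, q.Prime ∧ q < p ∧ q % 4 = 3 ∧ @legendreSym p ⟨hp⟩ q = -1 := by
  haveI : Fact p.Prime := ⟨hp⟩
  have hp2 : p ≠ 2 := by omega
  have hpodd : p % 2 = 1 := hp.eq_two_or_odd.resolve_left hp2
  rcases (by omega : p % 4 = 1 ∨ p % 4 = 3) with hp4 | hp4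
  · exact main1 p hp hp5 hp4
  · -- p ≡ 3 mod 4 : use a prime factor of p - 4
    have hp7 : 7 ≤ p := by omega
    set n := p - 4 with hn
    have hn4 : n % 4 = 3 := by omega
    obtain ⟨q, hqP, hqd, hq4⟩ := ex3mod4 n hn4
    haveI : Fact q.Prime := ⟨hqP⟩
    have hqn : q ≤ n := Nat.le_of_dvd (by omega) hqd
    have hqlt : q < p := by omega
    have hq2 : (2 : ZMod q) ≠ 0 := by
      intro h
      have h1 : ((2 : ℕ) : ZMod q) = 0 := by exact_mod_cast h
      have h2 : q ∣ 2 := (ZMod.natCast_eq_zero_iff _ _).mp h1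
      have := Nat.le_of_dvd (by norm_num) h2
      omega
    have hcast : (((p : ℕ) : ℤ) : ZMod q) = 2 ^ 2 := by
      have hn0 : ((n : ℕ) : ZMod q) = 0 := (ZMod.natCast_eq_zero_iff _ _).mpr hqd
      have h1 : ((p : ℕ) : ZMod q) = ((n + 4 : ℕ) : ZMod q) := by
        rw [show n + 4 = p from by omega]
      push_cast at h1
      push_cast
      rw [h1, hn0]
      norm_num
    have h1 : legendreSym q ((p : ℕ) : ℤ) = 1 := by
      rw [legendreSym.eq_one_iff]
      · exact ⟨2, by rw [hcast]; ring⟩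
      · rw [hcast]
        exact pow_ne_zero 2 hq2
    have h2 := legendreSym.quadratic_reciprocity_three_mod_four hp4 hq4
    refine ⟨q, hqP, hqlt, hq4, ?_⟩
    rw [h1] at h2
    linarith
end

section
/- Let q, k, r be distinct primes with q ≡ 3 (mod 4) and k ≡ r ≡ 1 (mod 4). Then there exist infinitely many primes w with w ≡ 3 (mod 4), (q/w) = 1, (k/w) = -1, (r/w) = -1, gcd(w, 16qkr) = 1, and gcd((w-1)/2, 16qkr) = 1. -/
/-- For distinct primes `q ≡ 3 (mod 4)` and `k ≡ r ≡ 1 (mod 4)`, there are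
infinitely many primes `w ≡ 3 (mod 4)` with `(q/w) = 1`, `(k/w) = (r/w) = -1`,
`gcd(w, 16qkr) = 1` and `gcd((w-1)/2, 16qkr) = 1`. -/
theorem stmt13 (q k r : ℕ) (hq : q.Prime) (hk : k.Prime) (hr : r.Prime)
    (hqk : q ≠ k) (hqr : q ≠ r) (hkr : k ≠ r)
    (hq4 : q % 4 = 3) (hk4 : k % 4 = 1) (hr4 : r % 4 = 1) :
    {w : ℕ | ∃ hw : w.Prime, w % 4 = 3 ∧
      @legendreSym w ⟨hw⟩ q = 1 ∧ @legendreSym w ⟨hw⟩ k = -1 ∧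
      @legendreSym w ⟨hw⟩ r = -1 ∧
      Nat.gcd w (16 * q * k * r) = 1 ∧
      Nat.gcd ((w - 1) / 2) (16 * q * k * r) = 1}.Infinite := by
  have hq2 : q ≠ 2 := by rintro rfl; omega
  have hk2 : k ≠ 2 := by rintro rfl; omega
  have hr2 : r ≠ 2 := by rintro rfl; omega
  haveI : Fact q.Prime := ⟨hq⟩
  haveI : Fact k.Prime := ⟨hk⟩
  haveI : Fact r.Prime := ⟨hr⟩
  -- choose quadratic nonresidues mod q, k, r
  obtain ⟨bq, hbq⟩ := FiniteField.exists_nonsquare (F := ZMod q)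
    (by rwa [ZMod.ringChar_zmod_n])
  obtain ⟨bk, hbk⟩ := FiniteField.exists_nonsquare (F := ZMod k)
    (by rwa [ZMod.ringChar_zmod_n])
  obtain ⟨br, hbr⟩ := FiniteField.exists_nonsquare (F := ZMod r)
    (by rwa [ZMod.ringChar_zmod_n])
  -- coprimality of the moduli
  have c2q : Nat.Coprime 2 q := (Nat.coprime_primes Nat.prime_two hq).mpr (Ne.symm hq2)
  have c2k : Nat.Coprime 2 k := (Nat.coprime_primes Nat.prime_two hk).mpr (Ne.symm hk2)
  have c2r : Nat.Coprime 2 r := (Nat.coprime_primes Nat.prime_two hr).mpr (Ne.symm hr2)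
  have c4q : Nat.Coprime 4 q := Nat.Coprime.mul c2q c2q
  have c4k : Nat.Coprime 4 k := Nat.Coprime.mul c2k c2k
  have c4r : Nat.Coprime 4 r := Nat.Coprime.mul c2r c2r
  have cqk : Nat.Coprime q k := (Nat.coprime_primes hq hk).mpr hqk
  have cqr : Nat.Coprime q r := (Nat.coprime_primes hq hr).mpr hqr
  have ckr : Nat.Coprime k r := (Nat.coprime_primes hk hr).mpr hkr
  -- Chinese remainder: a ≡ 3 mod 4, a ≡ bq mod q, a ≡ bk mod k, a ≡ br mod r
  obtain ⟨c1, hc1_4, hc1_q⟩ := Nat.chineseRemainder c4q 3 bq.val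
  obtain ⟨c2, hc2_4q, hc2_k⟩ := Nat.chineseRemainder (Nat.Coprime.mul c4k cqk) c1 bk.val
  obtain ⟨a, ha_4qk, ha_r⟩ := Nat.chineseRemainder
    (Nat.Coprime.mul (Nat.Coprime.mul c4r cqr) ckr) c2 br.val
  have ha_4q : a ≡ c1 [MOD 4 * q] :=
    (ha_4qk.of_dvd (dvd_mul_right (4 * q) k)).trans hc2_4q
  have ha4 : a % 4 = 3 := ha_4q.of_dvd (dvd_mul_right 4 q) |>.trans hc1_4
  have haq : a ≡ bq.val [MOD q] := (ha_4q.of_dvd (dvd_mul_left q 4)).trans hc1_q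
  have hak : a ≡ bk.val [MOD k] := (ha_4qk.of_dvd (dvd_mul_left k (4 * q))).trans hc2_k
  have har : a ≡ br.val [MOD r] := ha_r
  have haq' : ((a : ℕ) : ZMod q) = bq := by
    have h := (ZMod.natCast_eq_natCast_iff a bq.val q).mpr haq
    rwa [ZMod.natCast_zmod_val] at h
  have hak' : ((a : ℕ) : ZMod k) = bk := by
    have h := (ZMod.natCast_eq_natCast_iff a bk.val k).mpr hak
    rwa [ZMod.natCast_zmod_val] at h
  have har' : ((a : ℕ) : ZMod r) = br := by
    have h := (ZMod.natCast_eq_natCast_iff a br.val r).mpr har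
    rwa [ZMod.natCast_zmod_val] at h
  haveI : NeZero (4 * q * k * r) :=
    ⟨Nat.mul_ne_zero (Nat.mul_ne_zero (Nat.mul_ne_zero (by norm_num) hq.pos.ne') hk.pos.ne')
      hr.pos.ne'⟩
  -- helper: if w is not a square mod a prime p then p ∤ w and p ∤ (w-1)/2
  have nd : ∀ (w p : ℕ), w % 2 = 1 → p.Prime → ¬IsSquare ((w : ZMod p)) →
      ¬ p ∣ w ∧ ¬ p ∣ (w - 1) / 2 := by
    intro w p wodd pp hns
    haveI : Fact p.Prime := ⟨pp⟩
    constructor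
    · intro hd
      apply hns
      rw [(ZMod.natCast_eq_zero_iff w p).mpr hd]
      exact IsSquare.zero
    · intro hd
      apply hns
      have h2 : p ∣ w - 1 := hd.trans (Nat.div_dvd_of_dvd (by omega : 2 ∣ w - 1))
      have h3 : (1 : ℕ) ≡ w [MOD p] := (Nat.modEq_iff_dvd' (by omega : 1 ≤ w)).mpr h2
      have h4 := (ZMod.natCast_eq_natCast_iff 1 w p).mpr h3
      rw [Nat.cast_one] at h4
      rw [← h4]
      exact IsSquare.one
  -- the residue class is a unit
  have ca4 : Nat.Coprime a 4 := by
    have h : Nat.gcd 4 a = 1 := by rw [Nat.gcd_rec, ha4]; decide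
    exact Nat.coprime_comm.mp h
  have caq : Nat.Coprime a q := by
    rw [Nat.coprime_comm]
    refine (hq.coprime_iff_not_dvd).mpr fun hdvd => hbq ?_
    rw [← haq', (ZMod.natCast_eq_zero_iff a q).mpr hdvd]
    exact IsSquare.zero
  have cak : Nat.Coprime a k := by
    rw [Nat.coprime_comm]
    refine (hk.coprime_iff_not_dvd).mpr fun hdvd => hbk ?_
    rw [← hak', (ZMod.natCast_eq_zero_iff a k).mpr hdvd]
    exact IsSquare.zero
  have car : Nat.Coprime a r := by
    rw [Nat.coprime_comm]
    refine (hr.coprime_iff_not_dvd).mpr fun hdvd => hbr ?_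
    rw [← har', (ZMod.natCast_eq_zero_iff a r).mpr hdvd]
    exact IsSquare.zero
  have haunit : IsUnit ((a : ℕ) : ZMod (4 * q * k * r)) := by
    rw [ZMod.isUnit_iff_coprime]
    exact Nat.coprime_mul_iff_right.mpr
      ⟨Nat.coprime_mul_iff_right.mpr ⟨Nat.coprime_mul_iff_right.mpr ⟨ca4, caq⟩, cak⟩, car⟩
  refine (Nat.infinite_setOfPred_prime_and_eq_mod haunit).mono ?_
  rintro w ⟨hwp, hmod⟩
  haveI : Fact w.Prime := ⟨hwp⟩
  have hMN : w ≡ a [MOD 4 * q * k * r] := (ZMod.natCast_eq_natCast_iff _ _ _).mp hmod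
  have hw4 : w % 4 = 3 := by
    have h := hMN.of_dvd (show (4 : ℕ) ∣ 4 * q * k * r from ⟨q * k * r, by ring⟩)
    have : w % 4 = a % 4 := h
    omega
  have hw2 : w ≠ 2 := by omega
  have hwodd : w % 2 = 1 := by omega
  have hwq : ((w : ℕ) : ZMod q) = bq := by
    have h := hMN.of_dvd (show q ∣ 4 * q * k * r from ⟨4 * k * r, by ring⟩)
    rw [(ZMod.natCast_eq_natCast_iff w a q).mpr h]; exact haq'
  have hwk : ((w : ℕ) : ZMod k) = bk := by
    have h := hMN.of_dvd (show k ∣ 4 * q * k * r from ⟨4 * q * r, by ring⟩)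
    rw [(ZMod.natCast_eq_natCast_iff w a k).mpr h]; exact hak'
  have hwr : ((w : ℕ) : ZMod r) = br := by
    have h := hMN.of_dvd (show r ∣ 4 * q * k * r from ⟨4 * q * k, by ring⟩)
    rw [(ZMod.natCast_eq_natCast_iff w a r).mpr h]; exact har'
  have nsq : ¬IsSquare ((w : ZMod q)) := fun hs => hbq (hwq ▸ hs)
  have nsk : ¬IsSquare ((w : ZMod k)) := fun hs => hbk (hwk ▸ hs)
  have nsr : ¬IsSquare ((w : ZMod r)) := fun hs => hbr (hwr ▸ hs)
  obtain ⟨ndq1, ndq2⟩ := nd w q hwodd hq nsq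
  obtain ⟨ndk1, ndk2⟩ := nd w k hwodd hk nsk
  obtain ⟨ndr1, ndr2⟩ := nd w r hwodd hr nsr
  refine ⟨hwp, hw4, ?_, ?_, ?_, ?_, ?_⟩
  · rw [legendreSym.quadratic_reciprocity_three_mod_four hq4 hw4,
      (legendreSym.eq_neg_one_iff' q).mpr nsq]
    norm_num
  · rw [legendreSym.quadratic_reciprocity_one_mod_four hk4 hw2]
    exact (legendreSym.eq_neg_one_iff' k).mpr nsk
  · rw [legendreSym.quadratic_reciprocity_one_mod_four hr4 hw2]
    exact (legendreSym.eq_neg_one_iff' r).mpr nsr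
  · have cw2 : Nat.Coprime 2 w := (Nat.coprime_primes Nat.prime_two hwp).mpr (Ne.symm hw2)
    have cw16 : Nat.Coprime w 16 := Nat.coprime_comm.mp (cw2.pow_left 4)
    have cwq : Nat.Coprime w q := Nat.coprime_comm.mp ((hq.coprime_iff_not_dvd).mpr ndq1)
    have cwk : Nat.Coprime w k := Nat.coprime_comm.mp ((hk.coprime_iff_not_dvd).mpr ndk1)
    have cwr : Nat.Coprime w r := Nat.coprime_comm.mp ((hr.coprime_iff_not_dvd).mpr ndr1)
    exact Nat.coprime_mul_iff_right.mpr
      ⟨Nat.coprime_mul_iff_right.mpr ⟨Nat.coprime_mul_iff_right.mpr ⟨cw16, cwq⟩, cwk⟩, cwr⟩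
  · have hm2 : ((w - 1) / 2) % 2 = 1 := by omega
    have cm2 : Nat.Coprime 2 ((w - 1) / 2) := by
      have h : Nat.gcd 2 ((w - 1) / 2) = 1 := by rw [Nat.gcd_rec, hm2]; decide
      exact h
    have cm16 : Nat.Coprime ((w - 1) / 2) 16 := Nat.coprime_comm.mp (cm2.pow_left 4)
    have cmq : Nat.Coprime ((w - 1) / 2) q :=
      Nat.coprime_comm.mp ((hq.coprime_iff_not_dvd).mpr ndq2)
    have cmk : Nat.Coprime ((w - 1) / 2) k :=
      Nat.coprime_comm.mp ((hk.coprime_iff_not_dvd).mpr ndk2)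
    have cmr : Nat.Coprime ((w - 1) / 2) r :=
      Nat.coprime_comm.mp ((hr.coprime_iff_not_dvd).mpr ndr2)
    exact Nat.coprime_mul_iff_right.mpr
      ⟨Nat.coprime_mul_iff_right.mpr ⟨Nat.coprime_mul_iff_right.mpr ⟨cm16, cmq⟩, cmk⟩, cmr⟩
end

section
/- Let p, q be distinct primes with p ≡ q ≡ 1 (mod 4). Then there exist infinitely many primes w with w ≡ 7 (mod 8), (2/w) = 1, (p/w) = -1, (q/w) = -1, gcd(w, 16pq) = 1, and gcd((w-1)/2, 16pq) = 1. -/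
/-- For distinct primes `p ≡ q ≡ 1 (mod 4)`, there are infinitely many primes
`w ≡ 7 (mod 8)` with `(2/w) = 1`, `(p/w) = (q/w) = -1`, `gcd(w, 16pq) = 1`
and `gcd((w-1)/2, 16pq) = 1`. -/
theorem stmt14 (p q : ℕ) (hp : p.Prime) (hq : q.Prime) (hpq : p ≠ q)
    (hp4 : p % 4 = 1) (hq4 : q % 4 = 1) :
    {w : ℕ | ∃ hw : w.Prime, w % 8 = 7 ∧
      @legendreSym w ⟨hw⟩ 2 = 1 ∧ @legendreSym w ⟨hw⟩ p = -1 ∧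
      @legendreSym w ⟨hw⟩ q = -1 ∧
      Nat.gcd w (16 * p * q) = 1 ∧
      Nat.gcd ((w - 1) / 2) (16 * p * q) = 1}.Infinite := by
  haveI : Fact p.Prime := ⟨hp⟩
  haveI : Fact q.Prime := ⟨hq⟩
  have hp2 : p ≠ 2 := by omega
  have hq2 : q ≠ 2 := by omega
  have hpodd : p % 2 = 1 := by omega
  have hqodd : q % 2 = 1 := by omega
  -- nonsquares mod p and q
  obtain ⟨b, hb⟩ := FiniteField.exists_nonsquare (F := ZMod p)
    (by rw [ZMod.ringChar_zmod_n]; exact hp2)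
  obtain ⟨c, hc⟩ := FiniteField.exists_nonsquare (F := ZMod q)
    (by rw [ZMod.ringChar_zmod_n]; exact hq2)
  have hb0 : b ≠ 0 := fun h => hb (h ▸ ⟨0, by simp⟩)
  have hc0 : c ≠ 0 := fun h => hc (h ▸ ⟨0, by simp⟩)
  have hb1 : b ≠ 1 := fun h => hb (h ▸ ⟨1, by simp⟩)
  have hc1 : c ≠ 1 := fun h => hc (h ▸ ⟨1, by simp⟩)
  -- coprimality
  have hcpq : p.Coprime q := (Nat.coprime_primes hp hq).mpr hpq
  have hc2p : Nat.Coprime 2 p := (Nat.coprime_primes Nat.prime_two hp).mpr (Ne.symm hp2)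
  have hc2q : Nat.Coprime 2 q := (Nat.coprime_primes Nat.prime_two hq).mpr (Ne.symm hq2)
  have hc8pq : Nat.Coprime 8 (p * q) := by
    have : Nat.Coprime 2 (p * q) := Nat.Coprime.mul_right hc2p hc2q
    exact Nat.Coprime.pow_left 3 this
  -- CRT
  obtain ⟨k₁, hk₁p, hk₁q⟩ := Nat.chineseRemainder hcpq b.val c.val
  obtain ⟨k, hk8, hkpq⟩ := Nat.chineseRemainder hc8pq 7 k₁
  set N := 8 * (p * q) with hN
  haveI : NeZero N := ⟨by have := hp.pos; have := hq.pos; positivity⟩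
  have hkp : k ≡ b.val [MOD p] :=
    ((hkpq.of_dvd ⟨q, rfl⟩).trans hk₁p)
  have hkq : k ≡ c.val [MOD q] :=
    ((hkpq.of_dvd ⟨p, mul_comm p q⟩).trans hk₁q)
  have hk8' : k % 8 = 7 := hk8
  -- k is a unit mod N
  have hbvlt : b.val < p := ZMod.val_lt b
  have hcvlt : c.val < q := ZMod.val_lt c
  have hbv0 : b.val ≠ 0 := fun h => hb0 (by rwa [← ZMod.val_eq_zero])
  have hcv0 : c.val ≠ 0 := fun h => hc0 (by rwa [← ZMod.val_eq_zero])
  have hkmodp : k % p = b.val := by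
    have h1 := hkp; unfold Nat.ModEq at h1
    rwa [Nat.mod_eq_of_lt hbvlt] at h1
  have hkmodq : k % q = c.val := by
    have h1 := hkq; unfold Nat.ModEq at h1
    rwa [Nat.mod_eq_of_lt hcvlt] at h1
  have hkcop : Nat.Coprime k N := by
    refine Nat.Coprime.mul_right ?_ (Nat.Coprime.mul_right ?_ ?_)
    · have h2 : Nat.Coprime 2 k := (Nat.prime_two.coprime_iff_not_dvd).mpr (by omega)
      have h8 := Nat.Coprime.pow_left 3 h2
      norm_num at h8
      exact h8.symm
    · exact (Nat.Coprime.symm ((hp.coprime_iff_not_dvd).mpr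
        (fun h => hbv0 (by omega))))
    · exact (Nat.Coprime.symm ((hq.coprime_iff_not_dvd).mpr
        (fun h => hcv0 (by omega))))
  have hunit : IsUnit ((k : ℕ) : ZMod N) := (ZMod.isUnit_iff_coprime k N).mpr hkcop
  have hinf := Nat.infinite_setOfPred_prime_and_eq_mod (q := N) hunit
  refine hinf.mono ?_
  rintro w ⟨hw, hweq⟩
  haveI : Fact w.Prime := ⟨hw⟩
  have hwk : w ≡ k [MOD N] := (ZMod.natCast_eq_natCast_iff w k N).mp hweq
  have hw8 : w % 8 = 7 := by
    have := hwk.of_dvd (⟨p * q, rfl⟩ : (8:ℕ) ∣ N)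
    unfold Nat.ModEq at this; omega
  have hwp : w % p = b.val := by
    have h1 := (hwk.of_dvd (⟨8 * q, by ring⟩ : p ∣ N)).trans hkp
    unfold Nat.ModEq at h1
    rwa [Nat.mod_eq_of_lt hbvlt] at h1
  have hwq : w % q = c.val := by
    have h1 := (hwk.of_dvd (⟨8 * p, by ring⟩ : q ∣ N)).trans hkq
    unfold Nat.ModEq at h1
    rwa [Nat.mod_eq_of_lt hcvlt] at h1
  have hw2 : w ≠ 2 := by omega
  have hwcastp : ((w : ℕ) : ZMod p) = b := by
    rw [ZMod.natCast_eq_natCast_iff' w b.val p |>.mpr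
      (by rw [hwp, Nat.mod_eq_of_lt hbvlt])]
    simp [ZMod.natCast_val, ZMod.cast_id']
  have hwcastq : ((w : ℕ) : ZMod q) = c := by
    rw [ZMod.natCast_eq_natCast_iff' w c.val q |>.mpr
      (by rw [hwq, Nat.mod_eq_of_lt hcvlt])]
    simp [ZMod.natCast_val, ZMod.cast_id']
  have hpw : legendreSym w p = -1 := by
    rw [legendreSym.quadratic_reciprocity_one_mod_four hp4 hw2]
    rw [legendreSym.eq_neg_one_iff']
    rwa [hwcastp]
  have hqw : legendreSym w q = -1 := by
    rw [legendreSym.quadratic_reciprocity_one_mod_four hq4 hw2]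
    rw [legendreSym.eq_neg_one_iff']
    rwa [hwcastq]
  have h2w : legendreSym w 2 = 1 := by
    rw [legendreSym.at_two hw2]
    rw [ZMod.χ₈_nat_eq_if_mod_eight]
    have hwodd : w % 2 = 1 := by omega
    simp [hw8, hwodd]
  -- gcd conditions
  have hbv1 : b.val ≠ 1 := fun h => hb1 (by
    have : ((b.val : ℕ) : ZMod p) = b := by simp [ZMod.natCast_val, ZMod.cast_id']
    rw [← this, h]; simp)
  have hcv1 : c.val ≠ 1 := fun h => hc1 (by
    have : ((c.val : ℕ) : ZMod q) = c := by simp [ZMod.natCast_val, ZMod.cast_id']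
    rw [← this, h]; simp)
  have hwp' : ¬ p ∣ w := fun h => hbv0 (by omega)
  have hwq' : ¬ q ∣ w := fun h => hcv0 (by omega)
  have hg1 : Nat.gcd w (16 * p * q) = 1 := by
    have : Nat.Coprime w (16 * p * q) := by
      refine Nat.Coprime.mul_right (Nat.Coprime.mul_right ?_ ?_) ?_
      · have h2 : Nat.Coprime 2 w := (Nat.prime_two.coprime_iff_not_dvd).mpr (by omega)
        have h16 := Nat.Coprime.pow_left 4 h2
        norm_num at h16
        exact h16.symm
      · exact Nat.Coprime.symm ((hp.coprime_iff_not_dvd).mpr hwp')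
      · exact Nat.Coprime.symm ((hq.coprime_iff_not_dvd).mpr hwq')
    exact this
  have hm : (w - 1) / 2 % 4 = 3 := by omega
  have hg2 : Nat.gcd ((w - 1) / 2) (16 * p * q) = 1 := by
    set m := (w - 1) / 2 with hmdef
    have hpm : ¬ p ∣ m := by
      rintro ⟨t, ht⟩
      have hw1 : w = p * (2 * t) + 1 := by
        rw [show p * (2 * t) = 2 * (p * t) by ring]
        omega
      have hmod : w % p = 1 % p := by rw [hw1, Nat.mul_add_mod]
      refine hbv1 ?_
      rw [← hwp, hmod]
      exact Nat.one_mod_eq_one.mpr (by omega)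
    have hqm : ¬ q ∣ m := by
      rintro ⟨t, ht⟩
      have hw1 : w = q * (2 * t) + 1 := by
        rw [show q * (2 * t) = 2 * (q * t) by ring]
        omega
      have hmod : w % q = 1 % q := by rw [hw1, Nat.mul_add_mod]
      refine hcv1 ?_
      rw [← hwq, hmod]
      exact Nat.one_mod_eq_one.mpr (by omega)
    have : Nat.Coprime m (16 * p * q) := by
      refine Nat.Coprime.mul_right (Nat.Coprime.mul_right ?_ ?_) ?_
      · have h2 : Nat.Coprime 2 m := (Nat.prime_two.coprime_iff_not_dvd).mpr (by omega)
        have h16 := Nat.Coprime.pow_left 4 h2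
        norm_num at h16
        exact h16.symm
      · exact Nat.Coprime.symm ((hp.coprime_iff_not_dvd).mpr hpm)
      · exact Nat.Coprime.symm ((hq.coprime_iff_not_dvd).mpr hqm)
    exact this
  exact ⟨hw, hw8, h2w, hpw, hqw, hg1, hg2⟩
end
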